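/- (Corollary for computing κ(R).) With the 0/1 adjacency matrix A built from a fixed ranking r_x ∈ R of length n, let L be the strictly lower-triangular part of A, let I be the n×n identity matrix, and let z = (1,…,1)^T ∈ ℝ^n. Then I − L is invertible and the total number of nonempty common subsequences satisfies κ(R) = κ_1(R) + z^T (I − L)^{-1} z − n, where κ_1(R) = tr(A). -/

import Mathlib

open List Matrix

/-- The set of nonempty common subsequences of a family of rankings,
where a ranking is a list and "subsequence" is `List.Sublist`. -/
def commonSubseq {α : Type*} (R : Set (List α)) : Set (List α) :=
  {y | y ≠ [] ∧ ∀ r ∈ R, y.Sublist r}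

/-- `κ(R)`: the number of nonempty common subsequences of the family `R`. -/
noncomputable def kappa {α : Type*} (R : Set (List α)) : ℕ :=
  (commonSubseq R).ncard

/-- `κ_p(R)`: the number of nonempty common subsequences of `R` of length `p`. -/
noncomputable def kappaP {α : Type*} (p : ℕ) (R : Set (List α)) : ℕ :=
  {y ∈ commonSubseq R | y.length = p}.ncard

section AuxZZ
variable {α : Type*} [DecidableEq α]
open scoped Classical

private def Pz (R : Finset (List α)) (rx : List α) (i : Fin rx.length) : Prop :=
  ∀ r ∈ R, rx.get i ∈ r

private def Ez (R : Finset (List α)) (rx : List α) (i j : Fin rx.length) : Prop :=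
  i < j ∧ Pz R rx i ∧ Pz R rx j ∧ ∀ r ∈ R, r.idxOf (rx.get i) < r.idxOf (rx.get j)

private lemma sublist_of_indexOf_chain' {y r : List α} (hmem : ∀ a ∈ y, a ∈ r)
    (hch : y.Chain' (fun a b => r.idxOf a < r.idxOf b)) : y.Sublist r := by
  haveI : IsTrans α (fun a b : α => r.idxOf a < r.idxOf b) :=
    ⟨fun a b c hab hbc => lt_trans hab hbc⟩
  have hpw := List.isChain_iff_pairwise.mp hch
  rw [List.sublist_iff_exists_fin_orderEmbedding_get_eq]
  have hlt : ∀ ix : Fin y.length, r.idxOf (y.get ix) < r.length :=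
    fun ix => List.idxOf_lt_length_iff.2 (hmem _ (y.get_mem _))
  refine ⟨OrderEmbedding.ofStrictMono (fun ix => ⟨r.idxOf (y.get ix), hlt ix⟩) ?_, ?_⟩
  · intro i j hij
    exact Fin.mk_lt_mk.2 (List.pairwise_iff_get.1 hpw i j hij)
  · intro ix
    exact (List.idxOf_get (hlt ix)).symm

private lemma indexOf_chain_of_sublist' {y r : List α} (hnd : r.Nodup) (hs : y.Sublist r) :
    y.Chain' (fun a b => r.idxOf a < r.idxOf b) := by
  obtain ⟨f, hf⟩ := List.sublist_iff_exists_fin_orderEmbedding_get_eq.1 hs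
  refine List.isChain_iff_getElem.2 ?_
  intro i h
  show r.idxOf (y.get ⟨i, by omega⟩) < r.idxOf (y.get ⟨i + 1, h⟩)
  rw [hf ⟨i, by omega⟩, hf ⟨i + 1, by omega⟩, List.get_idxOf hnd, List.get_idxOf hnd]
  exact f.strictMono (by simp [Fin.lt_def])

private lemma all_of_chainZZ {β : Type*} {E : β → β → Prop} {P : β → Prop}
    (hE : ∀ a b, E a b → P a ∧ P b) :
    ∀ (l : List β) (a : β), List.Chain E a l → l ≠ [] → ∀ c ∈ a :: l, P c := by
  intro l
  induction l with
  | nil => intro a _ h; exact absurd rfl h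
  | cons b t ih =>
    intro a hch _ c hc
    have hch : E a b ∧ List.Chain E b t := List.isChain_cons_cons.1 hch
    rcases List.mem_cons.1 hc with rfl | hc
    · exact (hE _ _ hch.1).1
    · rcases eq_or_ne t [] with rfl | hne
      · rw [List.mem_singleton] at hc
        subst hc
        exact (hE _ _ hch.1).2
      · exact ih b hch.2 hne c hc

private lemma vecMul_pow_count {R : Finset (List α)} {rx : List α}
    (L : Matrix (Fin rx.length) (Fin rx.length) ℝ)
    (hLE : ∀ i j, L i j = if Ez R rx j i then 1 else 0) :
    ∀ (k : ℕ) (j : Fin rx.length),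
      Matrix.vecMul (fun _ => (1:ℝ)) (L ^ k) j =
        ∑ f : Fin k → Fin rx.length,
          if List.Chain (Ez R rx) j (List.ofFn f) then (1:ℝ) else 0 := by
  intro k
  induction k with
  | zero =>
    intro j
    rw [pow_zero, Matrix.vecMul_one]
    simp [List.ofFn_zero]
    exact List.IsChain.singleton _
  | succ k ih =>
    intro j
    rw [pow_succ, ← Matrix.vecMul_vecMul]
    have hv : ∀ (w : Fin rx.length → ℝ),
        Matrix.vecMul w L j = ∑ i, w i * L i j := by
      intro w
      simp [Matrix.vecMul, dotProduct]
    rw [hv]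
    have : ∀ i : Fin rx.length,
        Matrix.vecMul (fun _ => (1:ℝ)) (L ^ k) i * L i j =
          ∑ f : Fin k → Fin rx.length,
            if Ez R rx j i ∧ List.Chain (Ez R rx) i (List.ofFn f) then (1:ℝ) else 0 := by
      intro i
      rw [ih i, hLE i j, Finset.sum_mul]
      refine Finset.sum_congr rfl fun f _ => ?_
      by_cases h1 : Ez R rx j i <;> by_cases h2 : List.Chain (Ez R rx) i (List.ofFn f) <;>
        simp [h1, h2]
    rw [Finset.sum_congr rfl fun i _ => this i, ← Fintype.sum_prod_type']
    refine Fintype.sum_equiv (Fin.consEquiv fun _ => Fin rx.length) _ _ fun p => ?_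
    congr 1
    have hofn : List.ofFn ((Fin.consEquiv fun _ => Fin rx.length) p) =
        p.1 :: List.ofFn p.2 := by
      rw [List.ofFn_succ]
      simp [Fin.consEquiv]
    rw [hofn, eq_iff_iff]
    exact (List.isChain_cons_cons (R := Ez R rx)).symm

private lemma count_eqZZ {R : Finset (List α)} {rx : List α} (hnd : ∀ r ∈ R, r.Nodup)
    (hrx : rx ∈ R) (k : ℕ) :
    (∑ g : Fin (k+2) → Fin rx.length,
        if List.Chain' (Ez R rx) (List.ofFn g) then (1:ℝ) else 0)
      = ((rx.sublists.toFinset.filter (fun y => y ≠ [] ∧ ∀ r ∈ R, y.Sublist r)).filter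
          (fun y => y.length = k+2)).card := by
  have hndx : rx.Nodup := hnd rx hrx
  rw [Finset.sum_boole]
  congr 1
  apply Finset.card_bij (fun g _ => List.map rx.get (List.ofFn g))
  · -- maps into
    intro g hg
    rw [Finset.mem_filter] at hg
    have hch : List.Chain' (Ez R rx) (List.ofFn g) := hg.2
    have hPall : ∀ c ∈ List.ofFn g, Pz R rx c := by
      rw [List.ofFn_succ] at hch ⊢
      refine all_of_chainZZ (fun a b h => ⟨h.2.1, h.2.2.1⟩) _ _ hch ?_
      intro hemp
      have := congrArg List.length hemp
      simp at this
    have hsub : ∀ r ∈ R, (List.map rx.get (List.ofFn g)).Sublist r := by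
      intro r hr
      apply sublist_of_indexOf_chain'
      · intro a ha
        rw [List.mem_map] at ha
        obtain ⟨c, hc, rfl⟩ := ha
        exact hPall c hc r hr
      · refine (List.isChain_map _).2 ?_
        exact List.IsChain.imp (fun a b h => h.2.2.2 r hr) hch
    rw [Finset.mem_filter, Finset.mem_filter, List.mem_toFinset, List.mem_sublists]
    refine ⟨⟨hsub rx hrx, ?_, hsub⟩, by simp⟩
    intro hemp
    have := congrArg List.length hemp
    simp at this
  · -- injective
    intro g₁ h₁ g₂ h₂ heq
    exact List.ofFn_injective
      ((List.map_injective_iff.2 (List.nodup_iff_injective_get.1 hndx)) heq)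
  · -- surjective
    intro y hy
    rw [Finset.mem_filter, Finset.mem_filter, List.mem_toFinset, List.mem_sublists] at hy
    obtain ⟨⟨hyrx, hyne, hysub⟩, hlen⟩ := hy
    obtain ⟨f, hf⟩ := List.sublist_iff_exists_fin_orderEmbedding_get_eq.1 hyrx
    refine ⟨fun t => f (Fin.cast hlen.symm t), ?_, ?_⟩
    · rw [Finset.mem_filter]
      refine ⟨Finset.mem_univ _, ?_⟩
      refine List.isChain_iff_getElem.2 ?_
      intro t ht
      rw [List.length_ofFn] at ht
      rw [List.getElem_ofFn, List.getElem_ofFn]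
      refine ⟨f.strictMono ?_, ?_, ?_, ?_⟩
      · simp only [Fin.lt_def, Fin.coe_cast, Fin.val_mk]
        omega
      · intro r hr
        rw [← hf]
        exact (hysub r hr).subset (y.get_mem _)
      · intro r hr
        rw [← hf]
        exact (hysub r hr).subset (y.get_mem _)
      · intro r hr
        haveI : IsTrans α (fun a b : α => r.idxOf a < r.idxOf b) :=
          ⟨fun a b c hab hbc => lt_trans hab hbc⟩
        have hpw := List.isChain_iff_pairwise.mp
          (indexOf_chain_of_sublist' (hnd r hr) (hysub r hr))
        rw [← hf, ← hf]
        refine List.pairwise_iff_get.1 hpw _ _ ?_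
        simp only [Fin.lt_def, Fin.coe_cast, Fin.val_mk]
        omega
    · apply List.ext_get (by simp [hlen])
      intro m h1 h2
      rw [List.get_eq_getElem, List.getElem_map, List.getElem_ofFn]
      exact (hf _).symm


end AuxZZ

theorem kappa_via_inverse {α : Type*} [DecidableEq α]
    (R : Finset (List α)) (hR : R.Nonempty) (hnd : ∀ r ∈ R, r.Nodup)
    (rx : List α) (hrx : rx ∈ R)
    (A L : Matrix (Fin rx.length) (Fin rx.length) ℝ)
    (hdiag : ∀ i : Fin rx.length,
      A i i = if ∀ r ∈ R, rx.get i ∈ r then 1 else 0)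
    (hlowA : ∀ i j : Fin rx.length, j < i →
      A i j = if (∀ r ∈ R, rx.get i ∈ r) ∧ (∀ r ∈ R, rx.get j ∈ r) ∧
          (∀ r ∈ R, r.idxOf (rx.get j) < r.idxOf (rx.get i))
        then 1 else 0)
    (hupA : ∀ i j : Fin rx.length, i < j → A i j = 0)
    (hL : ∀ i j : Fin rx.length, L i j = if j < i then A i j else 0) :
    IsUnit (1 - L) ∧
    (kappa (R : Set (List α)) : ℝ) =
      (kappaP 1 (R : Set (List α)) : ℝ) +
        dotProduct (fun _ => 1) ((1 - L)⁻¹.mulVec fun _ => 1) - rx.length ∧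
    (kappaP 1 (R : Set (List α)) : ℝ) = A.trace := by
  classical
  have hndx : rx.Nodup := hnd rx hrx
  -- L as adjacency matrix of Ez
  have hLE : ∀ i j, L i j = if Ez R rx j i then 1 else 0 := by
    intro i j
    rw [hL i j]
    by_cases hji : j < i
    · rw [if_pos hji, hlowA i j hji]
      refine if_congr ?_ rfl rfl
      constructor
      · rintro ⟨h1, h2, h3⟩; exact ⟨hji, h2, h1, h3⟩
      · rintro ⟨_, h2, h1, h3⟩; exact ⟨h1, h2, h3⟩
    · rw [if_neg hji, if_neg fun hc => hji hc.1]
  -- nilpotency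
  have hpb : ∀ (k : ℕ) (i j : Fin rx.length), (L ^ k) i j ≠ 0 → (j : ℕ) + k ≤ (i : ℕ) := by
    intro k
    induction k with
    | zero =>
      intro i j h
      rw [pow_zero] at h
      by_contra hc
      exact h (Matrix.one_apply_ne (by intro he; subst he; omega))
    | succ k ih =>
      intro i j h
      rw [pow_succ, Matrix.mul_apply] at h
      obtain ⟨m, -, hm⟩ := Finset.exists_ne_zero_of_sum_ne_zero h
      have h1 : (L ^ k) i m ≠ 0 := fun hz => hm (by rw [hz, zero_mul])
      have h2 : L m j ≠ 0 := fun hz => hm (by rw [hz, mul_zero])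
      rw [hLE m j] at h2
      have hedge : Ez R rx j m := by by_contra hc; exact h2 (if_neg hc)
      have hjm : (j : ℕ) < (m : ℕ) := hedge.1
      have := ih i m h1
      omega
  have hLn : L ^ rx.length = 0 := by
    ext i j
    rw [Matrix.zero_apply]
    by_contra h
    have := hpb rx.length i j h
    have := i.isLt
    omega
  have hgeom : (1 - L) * (∑ k ∈ Finset.range rx.length, L ^ k) = 1 := by
    have hg := mul_geom_sum L rx.length
    rw [hLn] at hg
    rw [← neg_sub L 1, neg_mul, hg, zero_sub, neg_neg]
  have hunit : IsUnit (1 - L) := by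
    haveI := invertibleOfRightInverse _ _ hgeom
    exact isUnit_of_invertible _
  have hinv : (1 - L)⁻¹ = ∑ k ∈ Finset.range rx.length, L ^ k :=
    Matrix.inv_eq_right_inv hgeom
  -- the finset of nonempty common subsequences
  set CS : Finset (List α) :=
    rx.sublists.toFinset.filter (fun y => y ≠ [] ∧ ∀ r ∈ R, y.Sublist r) with hCSdef
  set c : ℕ → ℕ := fun p => (CS.filter (fun y => y.length = p)).card with hcdef
  have hCSset : commonSubseq (R : Set (List α)) = ↑CS := by
    ext y
    simp only [commonSubseq, Set.mem_setOf_eq, hCSdef, Finset.coe_filter,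
      List.mem_toFinset, List.mem_sublists]
    constructor
    · rintro ⟨h1, h2⟩
      have h2' : ∀ r ∈ R, y.Sublist r := fun r hr => h2 r (Finset.mem_coe.2 hr)
      exact ⟨h2' rx hrx, h1, h2'⟩
    · rintro ⟨-, h1, h2⟩
      exact ⟨h1, fun r hr => h2 r (Finset.mem_coe.1 hr)⟩
  have hkappa : kappa (R : Set (List α)) = CS.card := by
    unfold kappa
    rw [hCSset, Set.ncard_coe_finset]
  have hkappaP : ∀ p, kappaP p (R : Set (List α)) = c p := by
    intro p
    unfold kappaP
    have hs : {y ∈ commonSubseq (R : Set (List α)) | y.length = p}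
        = ↑(CS.filter fun y => y.length = p) := by
      rw [hCSset]
      ext y
      simp [Set.mem_setOf_eq]
    rw [hs, Set.ncard_coe_finset, hcdef]
  have hsplit : CS.card = ∑ p ∈ Finset.range (rx.length + 1), c p := by
    rw [hcdef]
    refine Finset.card_eq_sum_card_fiberwise fun y hy => Finset.mem_range.2 ?_
    have : y.Sublist rx := by
      rw [hCSdef, Finset.mem_coe, Finset.mem_filter, List.mem_toFinset, List.mem_sublists] at hy
      exact hy.1
    have := this.length_le
    omega
  have h0 : c 0 = 0 := by
    rw [hcdef]
    rw [Finset.card_eq_zero, Finset.filter_eq_empty_iff]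
    intro y hy
    rw [hCSdef, Finset.mem_filter] at hy
    intro hlen
    exact hy.2.1 (List.length_eq_zero_iff.1 hlen)
  -- trace = kappaP 1
  have htr : A.trace = ((Finset.univ.filter (fun i => Pz R rx i)).card : ℝ) := by
    rw [← Finset.sum_boole]
    unfold Matrix.trace Matrix.diag
    refine Finset.sum_congr rfl fun i _ => ?_
    rw [hdiag i]
    refine if_congr ?_ rfl rfl
    exact Iff.rfl
  have hkp1 : kappaP 1 (R : Set (List α)) = (Finset.univ.filter (fun i => Pz R rx i)).card := by
    rw [hkappaP 1, hcdef]
    refine (Finset.card_bij (fun (i : Fin rx.length) _ => [rx.get i]) ?_ ?_ ?_).symm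
    · intro i hi
      rw [Finset.mem_filter] at hi
      rw [Finset.mem_filter, hCSdef, Finset.mem_filter, List.mem_toFinset, List.mem_sublists]
      refine ⟨⟨List.singleton_sublist.2 (rx.get_mem _), List.cons_ne_nil _ _,
        fun r hr => List.singleton_sublist.2 (hi.2 r hr)⟩, rfl⟩
    · intro i _ j _ h
      exact (List.nodup_iff_injective_get.1 hndx) (by injection h)
    · intro y hy
      rw [Finset.mem_filter] at hy
      obtain ⟨a, rfl⟩ := List.length_eq_one_iff.1 hy.2
      have hyCS := hy.1
      rw [hCSdef, Finset.mem_filter, List.mem_toFinset, List.mem_sublists] at hyCS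
      have ha : a ∈ rx := List.singleton_sublist.1 hyCS.1
      refine ⟨⟨rx.idxOf a, List.idxOf_lt_length_iff.2 ha⟩, ?_, ?_⟩
      · rw [Finset.mem_filter]
        refine ⟨Finset.mem_univ _, ?_⟩
        intro r hr
        rw [List.idxOf_get]
        exact List.singleton_sublist.1 (hyCS.2.2 r hr)
      · exact congrArg (fun z => [z]) (List.idxOf_get _)
  -- counting chains
  set S : ℕ → ℝ := fun p => ∑ g : Fin p → Fin rx.length,
    if List.Chain' (Ez R rx) (List.ofFn g) then (1:ℝ) else 0 with hSdef
  have hdot : dotProduct (fun _ => (1:ℝ)) ((1 - L)⁻¹.mulVec fun _ => 1)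
      = ∑ k ∈ Finset.range rx.length, S (k+1) := by
    simp only [hSdef]
    rw [Matrix.dotProduct_mulVec, hinv]
    have h1 : ∀ j, Matrix.vecMul (fun _ => (1:ℝ)) (∑ k ∈ Finset.range rx.length, L ^ k) j
        = ∑ k ∈ Finset.range rx.length, Matrix.vecMul (fun _ => (1:ℝ)) (L ^ k) j := by
      intro j
      simp only [Matrix.vecMul, dotProduct, Matrix.sum_apply, one_mul]
      exact Finset.sum_comm
    simp only [dotProduct, mul_one]
    rw [Finset.sum_congr rfl fun j _ => h1 j, Finset.sum_comm]
    refine Finset.sum_congr rfl fun k _ => ?_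
    rw [Finset.sum_congr rfl fun j _ => vecMul_pow_count L hLE k j,
      ← Fintype.sum_prod_type']
    refine Fintype.sum_equiv (Fin.consEquiv fun _ => Fin rx.length) _ _ fun p => ?_
    congr 1
    have hofn : List.ofFn ((Fin.consEquiv fun _ => Fin rx.length) p) =
        p.1 :: List.ofFn p.2 := by
      rw [List.ofFn_succ]
      simp [Fin.consEquiv]
    rw [hofn, eq_iff_iff]
    exact Iff.rfl
  have hC1 : S 1 = rx.length := by
    show (∑ g : Fin 1 → Fin rx.length,
      if List.Chain' (Ez R rx) (List.ofFn g) then (1:ℝ) else 0) = rx.length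
    have hall : ∀ g : Fin 1 → Fin rx.length, List.Chain' (Ez R rx) (List.ofFn g) := by
      intro g
      rw [List.ofFn_succ, List.ofFn_zero]
      exact List.isChain_singleton _
    rw [Finset.sum_congr rfl fun g _ => if_pos (hall g), Finset.sum_const, nsmul_eq_mul,
      mul_one, Finset.card_univ]
    simp
  have hC2 : ∀ k : ℕ, S (k+2) = (c (k+2) : ℝ) := by
    intro k
    show (∑ g : Fin (k+2) → Fin rx.length,
      if List.Chain' (Ez R rx) (List.ofFn g) then (1:ℝ) else 0) = (c (k+2) : ℝ)
    rw [count_eqZZ hnd hrx k, hcdef, hCSdef]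
  refine ⟨hunit, ?_, by rw [hkp1, htr]⟩
  rw [hkappa, hkappaP 1, hdot, hsplit]
  rcases Nat.eq_zero_or_pos rx.length with hn0 | hpos
  · have hc1 : c 1 ≤ CS.card := Finset.card_filter_le _ _
    rw [hsplit, hn0] at hc1
    rw [hn0]
    simp only [zero_add, Finset.range_one, Finset.sum_singleton, Finset.range_zero,
      Finset.sum_empty, h0] at hc1 ⊢
    have : c 1 = 0 := by omega
    rw [this]
    simp
  · obtain ⟨m, hm⟩ : ∃ m, rx.length = m + 1 := ⟨rx.length - 1, by omega⟩
    rw [hm]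
    rw [Finset.sum_range_succ' (fun p => c p) (m + 1),
      Finset.sum_range_succ' (fun p => c (p + 1)) m,
      Finset.sum_range_succ' (fun k => S (k + 1)) m]
    have hs2 : ∀ k ∈ Finset.range m, S (k+1+1) = (c (k+1+1) : ℝ) := fun k _ => hC2 k
    rw [Finset.sum_congr rfl hs2]
    have hc01 : S (0+1) = (rx.length : ℝ) := hC1
    rw [hc01, h0]
    push_cast [hm]
    ring
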